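/- Let H_n be the n×n tridiagonal matrix with main diagonal entries (3, 1, 1, ..., 1), subdiagonal entries all 1, and superdiagonal entries all 2. Then the permanent of H_n equals J_{n+2}, the (n+2)-nd Jacobsthal number. -/

import Mathlib

def jacobsthal : ℕ → ℤ
  | 0 => 0
  | 1 => 1
  | n + 2 => jacobsthal (n + 1) + 2 * jacobsthal n

def permanent {n : ℕ} (A : Matrix (Fin n) (Fin n) ℤ) : ℤ :=
  ∑ σ : Equiv.Perm (Fin n), ∏ i, A i (σ i)

def Hmat (n : ℕ) : Matrix (Fin n) (Fin n) ℤ :=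
  Matrix.of fun i j =>
    if (i : ℕ) = (j : ℕ) then (if (i : ℕ) = 0 then 3 else 1)
    else if (i : ℕ) = (j : ℕ) + 1 then 1
    else if (j : ℕ) = (i : ℕ) + 1 then 2
    else 0

open Equiv Equiv.Perm Finset

lemma permanent_colform {n : ℕ} (A : Matrix (Fin n) (Fin n) ℤ) :
    ∑ σ : Perm (Fin n), ∏ i, A (σ i) i = permanent A := by
  rw [permanent]
  rw [← Equiv.sum_comp (Equiv.inv (Perm (Fin n)))]
  refine Finset.sum_congr rfl fun σ _ => ?_
  rw [← Equiv.prod_comp σ]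
  simp

lemma permanent_transpose {n : ℕ} (A : Matrix (Fin n) (Fin n) ℤ) :
    permanent A.transpose = permanent A := by
  rw [← permanent_colform A]
  rfl

lemma permanent_succ_column_zero {n : ℕ} (A : Matrix (Fin (n + 1)) (Fin (n + 1)) ℤ) :
    permanent A = ∑ i : Fin (n + 1), A i 0 * permanent (A.submatrix i.succAbove Fin.succ) := by
  simp only [← permanent_colform]
  rw [Finset.univ_perm_fin_succ, ← Finset.univ_product_univ, Finset.sum_map,
    Finset.sum_product]
  refine Finset.sum_congr rfl fun p _ => ?_
  refine Fin.cases ?_ (fun i => ?_) p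
  · rw [Finset.mul_sum]
    refine Finset.sum_congr rfl fun σ _ => ?_
    rw [Fin.prod_univ_succ]
    simp [Matrix.submatrix]
  · rw [Finset.mul_sum]
    conv_rhs => rw [← Equiv.sum_comp (Equiv.mulLeft i.cycleRange)]
    refine Finset.sum_congr rfl fun σ _ => ?_
    rw [Fin.prod_univ_succ]
    simp only [Equiv.toEmbedding_apply, Equiv.Perm.decomposeFin_symm_apply_zero,
      Equiv.Perm.decomposeFin_symm_apply_succ, Matrix.submatrix_apply,
      Equiv.coe_mulLeft, Equiv.Perm.mul_apply, Fin.succAbove_cycleRange]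

lemma permanent_succ_row_zero {n : ℕ} (A : Matrix (Fin (n + 1)) (Fin (n + 1)) ℤ) :
    permanent A = ∑ j : Fin (n + 1), A 0 j * permanent (A.submatrix Fin.succ j.succAbove) := by
  rw [← permanent_transpose A, permanent_succ_column_zero]
  refine Finset.sum_congr rfl fun i _ => ?_
  rw [← permanent_transpose (A.submatrix Fin.succ i.succAbove)]
  rfl

lemma permanent_zero_column {n : ℕ} (A : Matrix (Fin n) (Fin n) ℤ) (j : Fin n)
    (h : ∀ i, A i j = 0) : permanent A = 0 := by
  refine Finset.sum_eq_zero fun σ _ => ?_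
  refine Finset.prod_eq_zero (Finset.mem_univ (σ⁻¹ j)) ?_
  rw [Equiv.Perm.coe_inv, Equiv.apply_symm_apply]
  exact h _

def Gmat (n : ℕ) : Matrix (Fin n) (Fin n) ℤ :=
  Matrix.of fun i j =>
    if (i : ℕ) = (j : ℕ) then 1
    else if (i : ℕ) = (j : ℕ) + 1 then 1
    else if (j : ℕ) = (i : ℕ) + 1 then 2
    else 0

lemma permanent_fin_zero (A : Matrix (Fin 0) (Fin 0) ℤ) : permanent A = 1 := by
  simp [permanent]

lemma permanent_fin_one (A : Matrix (Fin 1) (Fin 1) ℤ) : permanent A = A 0 0 := by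
  simp [permanent]

lemma val_succAbove {n : ℕ} (i : Fin (n + 1)) (j : Fin n) :
    ((i.succAbove j : Fin (n + 1)) : ℕ) = if (j : ℕ) < (i : ℕ) then (j : ℕ) else (j : ℕ) + 1 := by
  rw [Fin.succAbove]
  split_ifs with h1 h2 h2
  · rfl
  · exact absurd (by simpa [Fin.lt_def] using h1) h2
  · exact absurd (by simpa [Fin.lt_def] using h2) h1
  · rfl

section Submatrices

variable {n : ℕ}

lemma Gsub0 : (Gmat (n + 1)).submatrix Fin.succ ((0 : Fin (n + 1)).succAbove) = Gmat n := by
  ext i j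
  simp [Gmat, Matrix.submatrix, val_succAbove]

lemma Hsub0 : (Hmat (n + 1)).submatrix Fin.succ ((0 : Fin (n + 1)).succAbove) = Gmat n := by
  ext i j
  simp [Hmat, Gmat, Matrix.submatrix, val_succAbove]

end Submatrices

lemma hK_gen {n : ℕ} (A : Matrix (Fin (n + 2)) (Fin (n + 2)) ℤ)
    (h00 : ∀ r : Fin n, A r.succ.succ 0 = 0)
    (hrow : A 1 0 = 1)
    (hsub : (A.submatrix Fin.succ ((1 : Fin (n + 2)).succAbove)).submatrix
        Fin.succ ((0 : Fin (n + 1)).succAbove) = Gmat n) :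
    permanent (A.submatrix Fin.succ ((1 : Fin (n + 2)).succAbove)) = permanent (Gmat n) := by
  set K := A.submatrix Fin.succ ((1 : Fin (n + 2)).succAbove) with hKdef
  rw [permanent_succ_row_zero, Fin.sum_univ_succ]
  have hK00 : K 0 0 = 1 := by
    have h0 : ((1 : Fin (n + 2)).succAbove 0 : ℕ) = 0 := by
      rw [val_succAbove]; simp
    have : (1 : Fin (n + 2)).succAbove 0 = 0 := Fin.ext h0
    simp [hKdef, Matrix.submatrix_apply, this, hrow]
  have hzero : ∀ i : Fin n, permanent (K.submatrix Fin.succ i.succ.succAbove) = 0 := by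
    intro i
    apply permanent_zero_column _ ⟨0, i.pos⟩
    intro r
    have h1 : i.succ.succAbove ⟨0, i.pos⟩ = 0 := by
      apply Fin.ext
      rw [val_succAbove]
      simp
    have h2 : (1 : Fin (n + 2)).succAbove 0 = 0 := by
      apply Fin.ext
      rw [val_succAbove]; simp
    simp only [Matrix.submatrix_apply, hKdef, h1, h2]
    exact h00 r
  rw [hK00, one_mul, hsub,
    Finset.sum_eq_zero fun i _ => by rw [hzero i, mul_zero], add_zero]

lemma permanent_Gmat (n : ℕ) : permanent (Gmat n) = jacobsthal (n + 1) := by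
  induction n using Nat.twoStepInduction with
  | zero => rw [permanent_fin_zero]; rfl
  | one => rw [permanent_fin_one]; rfl
  | more n ih ih2 =>
    rw [permanent_succ_row_zero, Fin.sum_univ_succ, Fin.sum_univ_succ, Fin.succ_zero_eq_one]
    have hrest : ∀ j : Fin n, Gmat (n + 2) 0 (j.succ.succ) = 0 := by
      intro j; simp [Gmat]
    rw [Finset.sum_eq_zero fun j _ => by rw [hrest j, zero_mul], add_zero]
    have h00 : Gmat (n + 2) 0 0 = 1 := by simp [Gmat]
    have h01 : Gmat (n + 2) 0 1 = 2 := by simp [Gmat]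
    rw [h00, h01, Gsub0]
    rw [hK_gen (Gmat (n + 2)) (fun r => by simp [Gmat]) (by simp [Gmat]) (by
      ext i j
      simp [Gmat, Matrix.submatrix, val_succAbove])]
    rw [ih, ih2]
    show (1 : ℤ) * jacobsthal (n + 1 + 1) + 2 * jacobsthal (n + 1) = jacobsthal (n + 2 + 1)
    show (1 : ℤ) * jacobsthal (n + 2) + 2 * jacobsthal (n + 1) = jacobsthal (n + 3)
    rw [one_mul]
    rfl

theorem permanent_Hmat (n : ℕ) : permanent (Hmat n) = jacobsthal (n + 2) := by
  match n with
  | 0 => rw [permanent_fin_zero]; rfl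
  | 1 => rw [permanent_fin_one]; rfl
  | (n + 2) =>
    rw [permanent_succ_row_zero, Fin.sum_univ_succ, Fin.sum_univ_succ, Fin.succ_zero_eq_one]
    have hrest : ∀ j : Fin n, Hmat (n + 2) 0 (j.succ.succ) = 0 := by
      intro j; simp [Hmat]
    rw [Finset.sum_eq_zero fun j _ => by rw [hrest j, zero_mul], add_zero]
    have h00 : Hmat (n + 2) 0 0 = 3 := by simp [Hmat]
    have h01 : Hmat (n + 2) 0 1 = 2 := by simp [Hmat]
    rw [h00, h01, Hsub0]
    rw [hK_gen (Hmat (n + 2)) (fun r => by simp [Hmat]) (by simp [Hmat]) (by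
      ext i j
      simp [Hmat, Gmat, Matrix.submatrix, val_succAbove])]
    rw [permanent_Gmat, permanent_Gmat]
    show (3 : ℤ) * jacobsthal (n + 1 + 1) + 2 * jacobsthal (n + 1) = jacobsthal (n + 2 + 2)
    show (3 : ℤ) * jacobsthal (n + 2) + 2 * jacobsthal (n + 1) = jacobsthal (n + 4)
    have h4 : jacobsthal (n + 4) = jacobsthal (n + 3) + 2 * jacobsthal (n + 2) := rfl
    have h3 : jacobsthal (n + 3) = jacobsthal (n + 2) + 2 * jacobsthal (n + 1) := rfl
    rw [h4, h3]; ring
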